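/- Let (E,𝒫) be a random locally convex module over K with base (Ω,𝓕,P) and f : E → L⁰(𝓕,K) an L⁰(𝓕,K)-linear map. Then f is a.s. bounded of type II (i.e., there exist ξ ∈ L⁰₊(𝓕), a countable partition {Aₙ} of Ω into 𝓕-measurable sets, and finite subsets Qₙ ⊆ 𝒫 such that |f(x)| ≤ ξ·Σₙ Ĩ_{Aₙ}‖x‖_{Qₙ} a.e. for all x ∈ E) if and only if there exist a countable partition {Bₙ} of Ω into 𝓕-measurable sets and a sequence {fₙ} of a.s. bounded L⁰(𝓕,K)-linear functionals of type I (i.e., for each n there exist ξₙ ∈ L⁰₊(𝓕) and a finite Qₙ' ⊆ 𝒫 with |fₙ(x)| ≤ ξₙ‖x‖_{Qₙ'} a.e. for all x) such that f(x) agrees a.e. on Bₙ with fₙ(x) for every n and every x ∈ E. (In the paper's notation: E*_{ε,λ} = (E,𝒫_cc)*_c = H_cc(E*_c).) -/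

import Mathlib

open MeasureTheory Filter

/-- For a finite subset `Q` of the index set of a family of `L⁰`-seminorms, the pointwise
supremum `‖x‖_Q = ⋁{‖x‖ : ‖·‖ ∈ Q}` (the seminorms being a.e. nonnegative, truncating negative
values on the exceptional null set is harmless, and the supremum over the empty family is `0`). -/
noncomputable def finSup {ι : Type*} (Q : Finset ι) (g : ι → ℝ) : ℝ :=
  ((Q.sup fun i => Real.toNNReal (g i) : NNReal) : ℝ)

lemma finSup_nonneg {ι : Type*} (Q : Finset ι) (g : ι → ℝ) : 0 ≤ finSup Q g :=
  NNReal.coe_nonneg _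


lemma aeq_mul_add {Ω K : Type*} [MeasurableSpace Ω] {P : MeasureTheory.Measure Ω} [RCLike K]
    (a b c : Ω →ₘ[P] K) : a * (b + c) = a * b + a * c := by
  apply MeasureTheory.AEEqFun.ext
  filter_upwards [MeasureTheory.AEEqFun.coeFn_mul a (b + c),
    MeasureTheory.AEEqFun.coeFn_add b c, MeasureTheory.AEEqFun.coeFn_add (a * b) (a * c),
    MeasureTheory.AEEqFun.coeFn_mul a b, MeasureTheory.AEEqFun.coeFn_mul a c]
    with ω h1 h2 h3 h4 h5
  simp only [h1, h3, Pi.mul_apply, Pi.add_apply, h2, h4, h5, mul_add]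

lemma aeq_mul_left_comm {Ω K : Type*} [MeasurableSpace Ω] {P : MeasureTheory.Measure Ω} [RCLike K]
    (a b c : Ω →ₘ[P] K) : a * (b * c) = b * (a * c) := by
  apply MeasureTheory.AEEqFun.ext
  filter_upwards [MeasureTheory.AEEqFun.coeFn_mul a (b * c),
    MeasureTheory.AEEqFun.coeFn_mul b c, MeasureTheory.AEEqFun.coeFn_mul b (a * c),
    MeasureTheory.AEEqFun.coeFn_mul a c] with ω h1 h2 h3 h4
  simp only [h1, h3, Pi.mul_apply, h2, h4]
  ring

/-- For a random locally convex module `(E,𝒫)` over `K` with base `(Ω,𝓕,P)`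
and an `L⁰(𝓕,K)`-linear map `f : E → L⁰(𝓕,K)`: `f` is a.s. bounded of type II iff there are a
countable measurable partition `{Bₙ}` of `Ω` and a sequence `{fₙ}` of a.s. bounded
`L⁰(𝓕,K)`-linear functionals of type I with `f = fₙ` a.e. on `Bₙ` for each `n`
(i.e. `E*_{ε,λ} = (E,𝒫_cc)*_c = H_cc(E*_c)`). -/

theorem stmt5
    {Ω K ι E : Type*} [MeasurableSpace Ω] {P : Measure Ω} [IsProbabilityMeasure P]
    [RCLike K] [AddCommGroup E] [SMul (Ω →ₘ[P] K) E]
    -- `E` is a left module over `L⁰(𝓕,K)`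
    (hmoda : ∀ (ξ : Ω →ₘ[P] K) (x y : E), ξ • (x + y) = ξ • x + ξ • y)
    (hmodb : ∀ (ξ η : Ω →ₘ[P] K) (x : E), (ξ + η) • x = ξ • x + η • x)
    (hmodc : ∀ (ξ η : Ω →ₘ[P] K) (x : E), (ξ * η) • x = ξ • (η • x))
    (hmodd : ∀ x : E, (1 : Ω →ₘ[P] K) • x = x)
    -- `𝒫 = {p i : i ∈ ι}` is a separating family of `L⁰`-seminorms on `E`
    (p : ι → E → Ω →ₘ[P] ℝ)
    (hp_pos : ∀ i x, ∀ᵐ ω ∂P, 0 ≤ p i x ω)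
    (hp_tri : ∀ i x y, ∀ᵐ ω ∂P, p i (x + y) ω ≤ p i x ω + p i y ω)
    (hp_hom : ∀ i (ξ : Ω →ₘ[P] K) (x : E), ∀ᵐ ω ∂P, p i (ξ • x) ω = ‖ξ ω‖ * p i x ω)
    (hp_sep : ∀ x : E, (∀ i, ∀ᵐ ω ∂P, p i x ω = 0) → x = 0)
    -- `f` is an `L⁰(𝓕,K)`-linear map
    (f : E → Ω →ₘ[P] K)
    (hf_add : ∀ x y, f (x + y) = f x + f y)
    (hf_smul : ∀ (ξ : Ω →ₘ[P] K) (x : E), f (ξ • x) = ξ * f x) :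
    -- `f` is a.s. bounded of type II …
    (∃ (ξ : Ω →ₘ[P] ℝ) (A : ℕ → Set Ω) (Q : ℕ → Finset ι),
      (∀ᵐ ω ∂P, 0 ≤ ξ ω) ∧
      (∀ n, MeasurableSet (A n)) ∧ Pairwise (Function.onFun Disjoint A) ∧ (⋃ n, A n) = Set.univ ∧
      ∀ x, ∀ᵐ ω ∂P, ∀ n, ω ∈ A n → ‖f x ω‖ ≤ ξ ω * finSup (Q n) (fun i => p i x ω))
    ↔
    -- … iff `f` is a countable concatenation of type I functionals
    (∃ (B : ℕ → Set Ω) (F : ℕ → E → Ω →ₘ[P] K),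
      (∀ n, MeasurableSet (B n)) ∧ Pairwise (Function.onFun Disjoint B) ∧ (⋃ n, B n) = Set.univ ∧
      (∀ n, (∀ x y, F n (x + y) = F n x + F n y) ∧
            (∀ (ξ : Ω →ₘ[P] K) (x : E), F n (ξ • x) = ξ * F n x) ∧
            (∃ (ξ : Ω →ₘ[P] ℝ) (Q : Finset ι), (∀ᵐ ω ∂P, 0 ≤ ξ ω) ∧
              ∀ x, ∀ᵐ ω ∂P, ‖F n x ω‖ ≤ ξ ω * finSup Q (fun i => p i x ω))) ∧
      ∀ x, ∀ᵐ ω ∂P, ∀ n, ω ∈ B n → f x ω = F n x ω) := by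

  constructor
  · rintro ⟨ξ, A, Q, hξ, hA, hdis, hcov, hbd⟩
    refine ⟨A, fun n x =>
        (AEEqFun.mk ((A n).indicator fun _ => (1 : K))
          ((measurable_const.indicator (hA n)).aestronglyMeasurable)) * f x,
      hA, hdis, hcov, fun n => ⟨?_, ?_, ?_⟩, ?_⟩
    · intro x y; simp only [hf_add, aeq_mul_add]
    · intro ζ x; simp only [hf_smul, aeq_mul_left_comm]
    · refine ⟨ξ, Q n, hξ, fun x => ?_⟩
      filter_upwards [AEEqFun.coeFn_mul
          (AEEqFun.mk ((A n).indicator fun _ => (1 : K))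
            ((measurable_const.indicator (hA n)).aestronglyMeasurable)) (f x),
        AEEqFun.coeFn_mk ((A n).indicator fun _ => (1 : K))
          ((measurable_const.indicator (hA n)).aestronglyMeasurable),
        hbd x, hξ] with ω h1 h2 h3 h4
      rw [h1, Pi.mul_apply, h2]
      by_cases hω : ω ∈ A n
      · rw [Set.indicator_of_mem hω, one_mul]
        exact h3 n hω
      · rw [Set.indicator_of_notMem hω, zero_mul, norm_zero]
        exact mul_nonneg h4 (finSup_nonneg _ _)
    · intro x
      rw [ae_all_iff]
      intro n
      filter_upwards [AEEqFun.coeFn_mul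
          (AEEqFun.mk ((A n).indicator fun _ => (1 : K))
            ((measurable_const.indicator (hA n)).aestronglyMeasurable)) (f x),
        AEEqFun.coeFn_mk ((A n).indicator fun _ => (1 : K))
          ((measurable_const.indicator (hA n)).aestronglyMeasurable)] with ω h1 h2 hω
      rw [h1, Pi.mul_apply, h2, Set.indicator_of_mem hω, one_mul]
  · rintro ⟨B, F, hB, hdis, hcov, hFn, hagree⟩
    choose hFadd hFsmul ξn Qn hξpos hbd using hFn
    have hmk : ∀ n, AEMeasurable (ξn n) P := fun n =>
      (ξn n).aestronglyMeasurable.aemeasurable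
    set r : ℕ → Ω → ℝ := fun n ω => max ((hmk n).mk (ξn n) ω) 0 with hr
    have hrmeas : ∀ n, Measurable (r n) := fun n =>
      (hmk n).measurable_mk.max measurable_const
    have hrnn : ∀ n ω, 0 ≤ r n ω := fun n ω => le_max_right _ _
    have hreq : ∀ n, ∀ᵐ ω ∂P, r n ω = ξn n ω := by
      intro n
      filter_upwards [(hmk n).ae_eq_mk, hξpos n] with ω h1 h2
      rw [hr]; simp only [← h1]; exact max_eq_left h2
    set g : Ω → ℝ := fun ω =>
      (∑' n, ENNReal.ofReal ((B n).indicator (r n) ω)).toReal with hgdef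
    have hg : Measurable g :=
      (Measurable.ennreal_tsum fun n =>
        ENNReal.measurable_ofReal.comp ((hrmeas n).indicator (hB n))).ennreal_toReal
    have hgval : ∀ n ω, ω ∈ B n → g ω = r n ω := by
      intro n ω hω
      have : (∑' m, ENNReal.ofReal ((B m).indicator (r m) ω))
          = ENNReal.ofReal ((B n).indicator (r n) ω) := by
        refine tsum_eq_single n fun m hm => ?_
        have hωm : ω ∉ B m := fun h =>
          Set.disjoint_left.mp (hdis hm) h hω
        rw [Set.indicator_of_notMem hωm, ENNReal.ofReal_zero]
      rw [hgdef]
      simp only [this, Set.indicator_of_mem hω]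
      exact ENNReal.toReal_ofReal (hrnn n ω)
    refine ⟨AEEqFun.mk g hg.aestronglyMeasurable, B, Qn, ?_, hB, hdis, hcov, fun x => ?_⟩
    · filter_upwards [AEEqFun.coeFn_mk g hg.aestronglyMeasurable] with ω h
      rw [h]; exact ENNReal.toReal_nonneg
    · have hh : ∀ᵐ ω ∂P, ∀ n,
          ‖F n x ω‖ ≤ ξn n ω * finSup (Qn n) (fun i => p i x ω) ∧ r n ω = ξn n ω := by
        rw [ae_all_iff]
        intro n
        filter_upwards [hbd n x, hreq n] with ω h1 h2 using ⟨h1, h2⟩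
      filter_upwards [hagree x, hh, AEEqFun.coeFn_mk g hg.aestronglyMeasurable]
        with ω h1 h2 h3 n hω
      rw [h3, h1 n hω, hgval n ω hω, (h2 n).2]
      exact (h2 n).1
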